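/- For any subset A of the vertex set {0,1}^m of the m-dimensional Boolean cube, the outer vertex boundary satisfies |Γ'A| ≥ |Γ'I_{|A|}|, where I_a is the set of the first a elements in Hales (simplicial) order and Γ'S = ΓS \ S is the set of vertices outside S adjacent to S. -/

import Mathlib

/-- Hales (simplicial) order on the Boolean cube: smaller Hamming weight first;
for equal weights, `x` precedes `y` if the smallest coordinate where they differ is `1` in `x`. -/
def halesLT {m : ℕ} (x y : Fin m → ZMod 2) : Prop :=
  hammingNorm x < hammingNorm y ∨
    (hammingNorm x = hammingNorm y ∧
      ∃ i : Fin m, x i ≠ y i ∧ x i = 1 ∧ ∀ j : Fin m, j < i → x j = y j)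

/-- The set of the first `a` elements of the Boolean cube `{0,1}^m` in Hales order. -/
def halesInit (m a : ℕ) : Set (Fin m → ZMod 2) :=
  {x | Nat.card {y : Fin m → ZMod 2 | halesLT y x} < a}

/-- The outer vertex boundary of a set in the Boolean cube graph. -/
def outerBoundary {m : ℕ} (A : Set (Fin m → ZMod 2)) : Set (Fin m → ZMod 2) :=
  {v | v ∉ A ∧ ∃ u ∈ A, hammingDist u v = 1}

open Finset
set_option linter.unusedSectionVars false
set_option maxHeartbeats 1000000
namespace Harper
variable {ι : Type*} [Fintype ι] [LinearOrder ι]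
def hlt (x y : ι → ZMod 2) : Prop :=
  hammingNorm x < hammingNorm y ∨
    (hammingNorm x = hammingNorm y ∧
      ∃ i : ι, x i ≠ y i ∧ x i = 1 ∧ ∀ j : ι, j < i → x j = y j)

instance (x y : ι → ZMod 2) : Decidable (hlt x y) := by unfold hlt; infer_instance

lemma z2cases (a : ZMod 2) : a = 0 ∨ a = 1 := by revert a; decide

lemma z2other {a b : ZMod 2} (h : a ≠ b) (h1 : a ≠ 1) : b = 1 := by revert h h1; revert a b; decide

lemma z2other' {a b : ZMod 2} (h : a ≠ b) (h1 : a = 1) : b = 0 := by revert h h1; revert a b; decide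

lemma hlt_irrefl (x : ι → ZMod 2) : ¬ hlt x x := by
  rintro (h | ⟨-, i, hne, -⟩) <;> simp_all

lemma hlt_asymm {x y : ι → ZMod 2} (h : hlt x y) (h' : hlt y x) : False := by
  rcases h with h | ⟨hn, i, hne, h1, hb⟩
  · rcases h' with h' | ⟨hn', -⟩ <;> omega
  · rcases h' with h' | ⟨hn', i', hne', h1', hb'⟩
    · omega
    · rcases lt_trichotomy i i' with hc | hc | hc
      · exact hne (hb' _ hc).symm
      · subst hc
        have := z2other' hne h1
        rw [this] at h1'; exact absurd h1' (by decide)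
      · exact hne' (hb _ hc).symm

lemma hlt_trans {x y z : ι → ZMod 2} (h : hlt x y) (h' : hlt y z) : hlt x z := by
  rcases h with h | ⟨hn, i, hne, h1, hb⟩
  · rcases h' with h' | ⟨hn', -⟩
    · exact Or.inl (h.trans h')
    · exact Or.inl (hn' ▸ h)
  · rcases h' with h' | ⟨hn', i', hne', h1', hb'⟩
    · exact Or.inl (hn ▸ h')
    · refine Or.inr ⟨hn.trans hn', ?_⟩
      rcases lt_trichotomy i i' with hc | hc | hc
      · refine ⟨i, ?_, h1, fun j hj => (hb j hj).trans (hb' j (hj.trans hc))⟩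
        rw [← hb' i hc]; exact hne
      · subst hc
        exact absurd h1' (by rw [z2other' hne h1]; decide)
      · refine ⟨i', ?_, ?_, fun j hj => (hb j (hj.trans hc)).trans (hb' j hj)⟩
        · rw [hb i' hc]; exact hne'
        · rw [hb i' hc]; exact h1'

/-- coordinates where x and y differ -/
def Dif (x y : ι → ZMod 2) : Finset ι := {i | x i ≠ y i}

lemma mem_Dif {x y : ι → ZMod 2} {i : ι} : i ∈ Dif x y ↔ x i ≠ y i := by
  simp [Dif]

lemma hammingDist_eq_card_Dif (x y : ι → ZMod 2) : hammingDist x y = (Dif x y).card := rfl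

lemma Dif_nonempty {x y : ι → ZMod 2} (h : x ≠ y) : (Dif x y).Nonempty := by
  by_contra hc
  rw [not_nonempty_iff_eq_empty] at hc
  exact h (funext fun i => by
    by_contra hne
    exact absurd (mem_Dif.2 hne) (by simp [hc]))

lemma hlt_trichotomy (x y : ι → ZMod 2) : hlt x y ∨ x = y ∨ hlt y x := by
  by_cases hxy : x = y
  · exact Or.inr (Or.inl hxy)
  rcases lt_trichotomy (hammingNorm x) (hammingNorm y) with h | h | h
  · exact Or.inl (Or.inl h)
  · have hne := Dif_nonempty hxy
    set i := (Dif x y).min' hne with hi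
    have hmem : x i ≠ y i := mem_Dif.1 ((Dif x y).min'_mem hne)
    have hbel : ∀ j : ι, j < i → x j = y j := by
      intro j hj
      by_contra hc
      exact absurd (min'_le _ _ (mem_Dif.2 hc)) (not_le.2 hj)
    rcases z2cases (x i) with h0 | h1
    · refine Or.inr (Or.inr (Or.inr ⟨h.symm, i, hmem.symm, z2other hmem (h0 ▸ by decide), ?_⟩))
      exact fun j hj => (hbel j hj).symm
    · exact Or.inl (Or.inr ⟨h, i, hmem, h1, hbel⟩)
  · exact Or.inr (Or.inr (Or.inl h))


/-- rank in the Hales order -/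
def rk (x : ι → ZMod 2) : ℕ := #(univ.filter (fun y => hlt y x))

lemma rk_lt_rk {x y : ι → ZMod 2} (h : hlt x y) : rk x < rk y := by
  apply card_lt_card
  constructor
  · intro z hz
    simp only [mem_filter, mem_univ, true_and] at hz ⊢
    exact hlt_trans hz h
  · intro hsub
    have : x ∈ univ.filter (fun z => hlt z y) := by
      simp only [mem_filter, mem_univ, true_and]; exact h
    have := hsub this
    simp only [mem_filter, mem_univ, true_and] at this
    exact hlt_irrefl x this

lemma hlt_of_rk_lt {x y : ι → ZMod 2} (h : rk x < rk y) : hlt x y := by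
  rcases hlt_trichotomy x y with h' | h' | h'
  · exact h'
  · subst h'; omega
  · exact absurd (rk_lt_rk h') (by omega)

lemma rk_lt_iff {x y : ι → ZMod 2} : rk x < rk y ↔ hlt x y := ⟨hlt_of_rk_lt, rk_lt_rk⟩

lemma rk_inj {x y : ι → ZMod 2} (h : rk x = rk y) : x = y := by
  rcases hlt_trichotomy x y with h' | h' | h'
  · exact absurd (rk_lt_rk h') (by omega)
  · exact h'
  · exact absurd (rk_lt_rk h') (by omega)

/-- initial segment of size a (if a ≤ 2^|ι|) -/
def init (a : ℕ) : Finset (ι → ZMod 2) := {x | rk x < a}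

lemma mem_init {a : ℕ} {x : ι → ZMod 2} : x ∈ (init a : Finset (ι → ZMod 2)) ↔ rk x < a := by
  simp [init]

/-- down-closed set -/
def Low (A : Finset (ι → ZMod 2)) : Prop := ∀ ⦃x⦄, x ∈ A → ∀ ⦃y⦄, hlt y x → y ∈ A

lemma low_init (a : ℕ) : Low (init (ι := ι) a) := by
  intro x hx y hy
  rw [mem_init] at hx ⊢
  exact (rk_lt_rk hy).trans_le (by omega)

lemma exists_rk_eq : ∀ k, k < Fintype.card (ι → ZMod 2) → ∃ x : ι → ZMod 2, rk x = k := by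
  intro k
  induction k using Nat.strong_induction_on with
  | _ k IH =>
  intro hk
  have hcard_below : #(univ.filter (fun y : ι → ZMod 2 => rk y < k)) = k := by
    have hb : #(univ.filter (fun y : ι → ZMod 2 => rk y < k)) = #(Finset.range k) := by
      apply card_bij (fun y _ => rk y)
      · intro a ha; simp only [mem_filter, mem_univ, true_and] at ha; exact mem_range.2 ha
      · intro a ha b hb hab; exact rk_inj hab
      · intro j hj
        obtain ⟨y, hy⟩ := IH j (mem_range.1 hj) ((mem_range.1 hj).trans hk)
        exact ⟨y, by simp [hy, mem_range.1 hj], hy⟩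
    rw [hb, card_range]
  have hT : (univ.filter (fun z : ι → ZMod 2 => k ≤ rk z)).Nonempty := by
    by_contra hc
    rw [not_nonempty_iff_eq_empty] at hc
    have hall : ∀ z : ι → ZMod 2, rk z < k := by
      intro z
      by_contra hz
      have : z ∈ univ.filter (fun z : ι → ZMod 2 => k ≤ rk z) := by
        simp only [mem_filter, mem_univ, true_and]; omega
      rw [hc] at this
      exact absurd this (notMem_empty z)
    have : (univ : Finset (ι → ZMod 2)) = univ.filter (fun y : ι → ZMod 2 => rk y < k) := by
      ext z; simp [hall z]
    have := congrArg Finset.card this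
    rw [card_univ, hcard_below] at this
    omega
  obtain ⟨z, hzT, hzmin⟩ := Finset.exists_min_image _ rk hT
  simp only [mem_filter, mem_univ, true_and] at hzT
  refine ⟨z, ?_⟩
  have : univ.filter (fun y : ι → ZMod 2 => hlt y z) = univ.filter (fun y : ι → ZMod 2 => rk y < k) := by
    ext y
    simp only [mem_filter, mem_univ, true_and]
    constructor
    · intro hy
      by_contra hc
      push_neg at hc
      have := hzmin y (by simp only [mem_filter, mem_univ, true_and]; exact hc)
      exact absurd (rk_lt_rk hy) (by omega)
    · intro hy
      exact hlt_of_rk_lt (by omega)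
  rw [rk, this, hcard_below]

lemma card_init_of_le {a : ℕ} (h : a ≤ Fintype.card (ι → ZMod 2)) :
    (init (ι := ι) a).card = a := by
  have hb : (init (ι := ι) a).card = #(Finset.range a) := by
    apply card_bij (fun y _ => rk y)
    · intro x hx; exact mem_range.2 (mem_init.1 hx)
    · intro x _ y _ hxy; exact rk_inj hxy
    · intro j hj
      obtain ⟨y, hy⟩ := exists_rk_eq j ((mem_range.1 hj).trans_le h)
      have := mem_range.1 hj
      exact ⟨y, mem_init.2 (by omega), hy⟩
  rw [hb, card_range]

lemma low_eq_init {A : Finset (ι → ZMod 2)} (h : Low A) : A = init A.card := by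
  ext x
  rw [mem_init]
  constructor
  · intro hx
    have hsub : insert x (univ.filter (fun y : ι → ZMod 2 => hlt y x)) ⊆ A := by
      intro z hz
      rcases mem_insert.1 hz with rfl | hz
      · exact hx
      · simp only [mem_filter, mem_univ, true_and] at hz
        exact h hx hz
    have hcard := card_le_card hsub
    rw [card_insert_of_notMem (by simp [hlt_irrefl])] at hcard
    change rk x + 1 ≤ _ at hcard
    omega
  · intro hx
    by_contra hc
    have hsub : A ⊆ univ.filter (fun y : ι → ZMod 2 => hlt y x) := by
      intro d hd
      simp only [mem_filter, mem_univ, true_and]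
      rcases hlt_trichotomy x d with h' | h' | h'
      · exact absurd (h hd h') hc
      · exact absurd (h' ▸ hd) hc
      · exact h'
    have := card_le_card hsub
    change _ ≤ rk x at this
    omega

/-- two down-closed sets are nested -/
lemma low_nested {A B : Finset (ι → ZMod 2)} (hA : Low A) (hB : Low B) : A ⊆ B ∨ B ⊆ A := by
  rcases le_total A.card B.card with h | h
  · left
    rw [low_eq_init hA, low_eq_init hB]
    intro x hx; rw [mem_init] at hx ⊢; omega
  · right
    rw [low_eq_init hA, low_eq_init hB]
    intro x hx; rw [mem_init] at hx ⊢; omega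

/-- initial segments minimize rank-sums among subsets of any ambient set F -/
lemma sum_rk_lt {F : Finset (ι → ZMod 2)} :
    ∀ (S T : Finset (ι → ZMod 2)), T ⊆ F → S ⊆ F →
    (∀ x ∈ T, ∀ y ∈ F, hlt y x → y ∈ T) → T.card = S.card → T ≠ S →
    ∑ x ∈ T, rk x < ∑ x ∈ S, rk x := by
  intro S
  induction S using Finset.strongInduction with
  | _ S IH =>
  intro T hTF hSF hlow hcard hne
  have hSne : S.Nonempty := by
    rcases S.eq_empty_or_nonempty with rfl | h
    · exfalso; apply hne; rwa [card_empty, Finset.card_eq_zero] at hcard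
    · exact h
  have hTne : T.Nonempty := by rwa [← Finset.card_pos, hcard, Finset.card_pos]
  obtain ⟨s₁, hs₁S, hs₁max⟩ := Finset.exists_max_image S rk hSne
  obtain ⟨t₁, ht₁T, ht₁max⟩ := Finset.exists_max_image T rk hTne
  have hrkle : rk t₁ ≤ rk s₁ := by
    by_contra hc
    push_neg at hc
    have hST : S ⊆ T := by
      intro s hs
      exact hlow _ ht₁T _ (hSF hs) (hlt_of_rk_lt ((hs₁max s hs).trans_lt hc))
    have ht₁S : t₁ ∉ S := fun h => absurd (hs₁max t₁ h) (by omega)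
    have : S ⊂ T := ⟨hST, fun h => ht₁S (h ht₁T)⟩
    have h2 := card_lt_card this
    omega
  have hsum_T : ∑ x ∈ T, rk x = ∑ x ∈ T.erase t₁, rk x + rk t₁ :=
    (Finset.sum_erase_add _ _ ht₁T).symm
  have hsum_S : ∑ x ∈ S, rk x = ∑ x ∈ S.erase s₁, rk x + rk s₁ :=
    (Finset.sum_erase_add _ _ hs₁S).symm
  have hlow' : ∀ x ∈ T.erase t₁, ∀ y ∈ F, hlt y x → y ∈ T.erase t₁ := by
    intro x hx y hyF hyx
    have hxT := Finset.mem_of_mem_erase hx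
    refine Finset.mem_erase.2 ⟨?_, hlow _ hxT _ hyF hyx⟩
    rintro rfl
    exact absurd (ht₁max x hxT) (by have := rk_lt_rk hyx; omega)
  have hcard' : (T.erase t₁).card = (S.erase s₁).card := by
    rw [Finset.card_erase_of_mem ht₁T, Finset.card_erase_of_mem hs₁S, hcard]
  by_cases heq : T.erase t₁ = S.erase s₁
  · have hts : t₁ ≠ s₁ := by
      rintro rfl
      apply hne
      have h1 : T = insert t₁ (T.erase t₁) := (Finset.insert_erase ht₁T).symm
      have h2 : S = insert t₁ (S.erase t₁) := (Finset.insert_erase hs₁S).symm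
      rw [h1, h2, heq]
    have : rk t₁ < rk s₁ := lt_of_le_of_ne hrkle (fun h => hts (rk_inj h))
    rw [hsum_T, hsum_S, heq]
    omega
  · have hSerase_ss : S.erase s₁ ⊂ S := Finset.erase_ssubset hs₁S
    have := IH (S.erase s₁) hSerase_ss (T.erase t₁)
      ((Finset.erase_subset _ _).trans hTF) ((Finset.erase_subset _ _).trans hSF)
      hlow' hcard' heq
    omega


lemma z2ne0 {a : ZMod 2} : a ≠ 0 ↔ a = 1 := by revert a; decide
lemma z2a {a : ZMod 2} : a + 1 = 1 ↔ a = 0 := by revert a; decide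
lemma z2b {a : ZMod 2} : a + 1 = 0 ↔ a = 1 := by revert a; decide
lemma z2c {a b : ZMod 2} (h : a ≠ b) : b = a + 1 := by revert h; revert a b; decide
lemma z2d {a : ZMod 2} : a + 1 ≠ a := by revert a; decide

def Sx (x : ι → ZMod 2) : Finset ι := univ.filter (fun i => x i = 1)

lemma mem_Sx {x : ι → ZMod 2} {i : ι} : i ∈ Sx x ↔ x i = 1 := by simp [Sx]

lemma norm_eq_card_Sx (x : ι → ZMod 2) : hammingNorm x = (Sx x).card := by
  unfold hammingNorm Sx
  congr 1
  ext i
  simp only [mem_filter, mem_univ, true_and]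
  exact z2ne0

lemma Sx_inj {x y : ι → ZMod 2} (h : Sx x = Sx y) : x = y := by
  funext i
  rcases z2cases (x i) with h0 | h1
  · rcases z2cases (y i) with g0 | g1
    · rw [h0, g0]
    · exfalso
      have hmem : i ∈ Sx x := by rw [h]; exact mem_Sx.2 g1
      rw [mem_Sx] at hmem
      rw [hmem] at h0
      exact absurd h0 (by decide)
  · have hmem : i ∈ Sx y := by rw [← h]; exact mem_Sx.2 h1
    rw [h1, mem_Sx.1 hmem]

lemma Dif_symm_support {x y : ι → ZMod 2} {i : ι} :
    i ∈ Dif x y ↔ (i ∈ Sx x ∧ i ∉ Sx y) ∨ (i ∉ Sx x ∧ i ∈ Sx y) := by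
  rw [mem_Dif, mem_Sx, mem_Sx]
  generalize x i = a
  generalize y i = b
  revert a b; decide

lemma Dif_self (x : ι → ZMod 2) : Dif x x = ∅ := by
  ext i; rw [mem_Dif]; simp

lemma eq_of_Dif_empty {x y : ι → ZMod 2} (h : Dif x y = ∅) : x = y := by
  by_contra hc
  obtain ⟨i, hi⟩ := Dif_nonempty hc
  rw [h] at hi
  exact absurd hi (notMem_empty i)

lemma dH_self (x : ι → ZMod 2) : hammingDist x x = 0 := by
  rw [hammingDist_eq_card_Dif, Dif_self, card_empty]

def flp (i : ι) (x : ι → ZMod 2) : ι → ZMod 2 := fun j => if j = i then x i + 1 else x j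

lemma flp_apply_self (i : ι) (x : ι → ZMod 2) : flp i x i = x i + 1 := by simp [flp]

lemma flp_apply_ne {i j : ι} (h : j ≠ i) (x : ι → ZMod 2) : flp i x j = x j := by simp [flp, h]

lemma Dif_flp (i : ι) (x : ι → ZMod 2) : Dif x (flp i x) = {i} := by
  ext j
  rw [mem_Dif, mem_singleton]
  by_cases h : j = i
  · subst h
    rw [flp_apply_self]
    simp only [iff_true]
    exact fun hc => z2d hc.symm
  · rw [flp_apply_ne h]
    simp [h]

lemma dH_flp (i : ι) (x : ι → ZMod 2) : hammingDist x (flp i x) = 1 := by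
  rw [hammingDist_eq_card_Dif, Dif_flp, card_singleton]

lemma dist_le_one_iff {u v : ι → ZMod 2} :
    hammingDist u v ≤ 1 ↔ u = v ∨ ∃ i, v = flp i u := by
  constructor
  · intro h
    rw [hammingDist_eq_card_Dif] at h
    rcases Nat.le_one_iff_eq_zero_or_eq_one.1 h with hc | hc
    · rw [card_eq_zero] at hc
      exact Or.inl (eq_of_Dif_empty hc)
    · rw [card_eq_one] at hc
      obtain ⟨i, hi⟩ := hc
      refine Or.inr ⟨i, ?_⟩
      funext j
      by_cases hj : j = i
      · subst hj
        rw [flp_apply_self]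
        have : j ∈ Dif u v := by rw [hi]; exact mem_singleton_self j
        exact z2c (mem_Dif.1 this)
      · rw [flp_apply_ne hj]
        by_contra hne
        have : j ∈ Dif u v := mem_Dif.2 (fun hh => hne hh.symm)
        rw [hi, mem_singleton] at this
        exact hj this
  · rintro (rfl | ⟨i, rfl⟩)
    · rw [dH_self]; omega
    · rw [dH_flp]

lemma Sx_flp_mem {i : ι} {x : ι → ZMod 2} (h : i ∈ Sx x) : Sx (flp i x) = (Sx x).erase i := by
  ext j
  rw [mem_Sx, mem_erase, mem_Sx]
  by_cases hj : j = i
  · subst hj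
    rw [flp_apply_self, mem_Sx.1 h]
    constructor
    · intro h1; exact absurd h1 (by decide)
    · rintro ⟨hne, -⟩; exact absurd rfl hne
  · rw [flp_apply_ne hj]
    simp [hj]

lemma Sx_flp_not_mem {i : ι} {x : ι → ZMod 2} (h : i ∉ Sx x) : Sx (flp i x) = insert i (Sx x) := by
  ext j
  rw [mem_Sx, mem_insert, mem_Sx]
  by_cases hj : j = i
  · subst hj
    rw [flp_apply_self]
    have hx : x j = 0 := by
      rcases z2cases (x j) with h0 | h1
      · exact h0
      · exact absurd (mem_Sx.2 h1) h
    rw [hx]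
    simp
  · rw [flp_apply_ne hj]
    simp [hj]

lemma norm_flp_mem {i : ι} {x : ι → ZMod 2} (h : i ∈ Sx x) :
    hammingNorm (flp i x) + 1 = hammingNorm x := by
  rw [norm_eq_card_Sx, norm_eq_card_Sx, Sx_flp_mem h, card_erase_of_mem h]
  have : 0 < (Sx x).card := card_pos.2 ⟨i, h⟩
  omega

lemma norm_flp_not_mem {i : ι} {x : ι → ZMod 2} (h : i ∉ Sx x) :
    hammingNorm (flp i x) = hammingNorm x + 1 := by
  rw [norm_eq_card_Sx, norm_eq_card_Sx, Sx_flp_not_mem h, card_insert_of_notMem h]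

lemma hlt_iff_min {x y : ι → ZMod 2} (hn : hammingNorm x = hammingNorm y) (h : x ≠ y) :
    hlt x y ↔ x ((Dif x y).min' (Dif_nonempty h)) = 1 := by
  constructor
  · rintro (hlt | ⟨-, i, hne, h1, hb⟩)
    · omega
    · have hi : i ∈ Dif x y := mem_Dif.2 hne
      have : (Dif x y).min' (Dif_nonempty h) = i := by
        apply le_antisymm (min'_le _ _ hi)
        by_contra hc
        push_neg at hc
        have hmem := (Dif x y).min'_mem (Dif_nonempty h)
        exact (mem_Dif.1 hmem) (hb _ hc)
      rw [this]; exact h1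
  · intro h1
    refine Or.inr ⟨hn, (Dif x y).min' (Dif_nonempty h), mem_Dif.1 ((Dif x y).min'_mem _), h1, ?_⟩
    intro j hj
    by_contra hc
    exact absurd (min'_le _ _ (mem_Dif.2 hc)) (not_le.2 hj)

lemma min'_congr {s t : Finset ι} (h : s = t) {hs : s.Nonempty} {ht : t.Nonempty} :
    s.min' hs = t.min' ht := by subst h; rfl

lemma hlt_of_norm_lt {x y : ι → ZMod 2} (h : hammingNorm x < hammingNorm y) : hlt x y := Or.inl h

lemma norm_le_of_hlt {x y : ι → ZMod 2} (h : hlt x y) : hammingNorm x ≤ hammingNorm y := by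
  rcases h with h | ⟨h, -⟩ <;> omega

lemma core_nbr {w w' u : ι → ZMod 2} (hww : hlt w w') (hu : hammingDist u w' ≤ 1) :
    ∃ u', (hlt u' u ∨ u' = u) ∧ hammingDist u' w ≤ 1 := by
  rcases hlt_trichotomy w u with hwu | rfl | huw
  · exact ⟨w, Or.inl hwu, by rw [dH_self]; omega⟩
  · exact ⟨w, Or.inr rfl, by rw [dH_self]; omega⟩
  rcases Nat.lt_or_ge (hammingNorm u) (hammingNorm w) with hn | hn
  swap
  · -- norm u ≥ norm w (and hlt u w) : flip any element of Sx w down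
    have hnw : 1 ≤ hammingNorm w := by
      by_contra hc
      push_neg at hc
      have hw0 : hammingNorm w = 0 := by omega
      have hu0 : hammingNorm u = 0 := by have := norm_le_of_hlt huw; omega
      rw [hammingNorm_eq_zero] at hw0 hu0
      rw [hw0, hu0] at huw
      exact hlt_irrefl _ huw
    have hSw : (Sx w).Nonempty := by
      rw [← card_pos, ← norm_eq_card_Sx]; omega
    obtain ⟨j, hj⟩ := hSw
    refine ⟨flp j w, Or.inl (hlt_of_norm_lt ?_), by rw [hammingDist_comm, dH_flp]⟩
    have := norm_flp_mem hj
    omega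
  · -- hard case
    have hne_wu' : w ≠ w' := by rintro rfl; exact hlt_irrefl w hww
    have hu2 : hammingDist w' u ≤ 1 := by rwa [hammingDist_comm]
    rcases dist_le_one_iff.1 hu2 with heq | ⟨i, rfl⟩
    · subst heq; exact absurd hww (fun h => hlt_asymm h huw)
    have hnww' : hammingNorm w ≤ hammingNorm w' := norm_le_of_hlt hww
    by_cases hiw' : i ∈ Sx w'
    case neg =>
      exfalso
      have := norm_flp_not_mem hiw'
      omega
    have hnu : hammingNorm (flp i w') + 1 = hammingNorm w' := norm_flp_mem hiw'
    have hnn : hammingNorm w = hammingNorm w' := by omega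
    have hd := (hlt_iff_min hnn hne_wu').1 hww
    set d := (Dif w w').min' (Dif_nonempty hne_wu') with hd_def
    have hdmem : d ∈ Dif w w' := (Dif w w').min'_mem _
    have hdmin : ∀ j ∈ Dif w w', d ≤ j := fun j hj => min'_le _ _ hj
    by_cases hiw : i ∈ Sx w
    · -- u' = flp i w
      refine ⟨flp i w, ?_, by rw [hammingDist_comm, dH_flp]⟩
      have hDif_eq : Dif (flp i w) (flp i w') = Dif w w' := by
        ext j
        rw [mem_Dif, mem_Dif]
        by_cases hj : j = i
        · subst hj
          rw [flp_apply_self, flp_apply_self, mem_Sx.1 hiw, mem_Sx.1 hiw']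
          decide
        · rw [flp_apply_ne hj, flp_apply_ne hj]
      have hne2 : flp i w ≠ flp i w' := by
        intro hc
        apply hne_wu'
        funext j
        by_cases hj : j = i
        · subst hj; rw [mem_Sx.1 hiw, mem_Sx.1 hiw']
        · have := congrFun hc j
          rwa [flp_apply_ne hj, flp_apply_ne hj] at this
      left
      have hnorm2 : hammingNorm (flp i w) = hammingNorm (flp i w') := by
        have := norm_flp_mem hiw
        omega
      rw [hlt_iff_min hnorm2 hne2]
      have hmineq := min'_congr (hs := Dif_nonempty hne2) (ht := Dif_nonempty hne_wu') hDif_eq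
      rw [hmineq]
      have hdi : d ≠ i := by
        intro hc
        have := mem_Dif.1 hdmem
        rw [hc, mem_Sx.1 hiw, mem_Sx.1 hiw'] at this
        exact this rfl
      rw [flp_apply_ne hdi]
      exact hd
    · -- i ∉ Sx w: u' = flp Mw w where Mw = max of Sx w
      have hSw : (Sx w).Nonempty := by
        rw [← card_pos, ← norm_eq_card_Sx]; omega
      set Mw := (Sx w).max' hSw with hMw_def
      have hMmem : Mw ∈ Sx w := (Sx w).max'_mem hSw
      have hMmax : ∀ j ∈ Sx w, j ≤ Mw := fun j hj => le_max' _ _ hj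
      refine ⟨flp Mw w, ?_, by rw [hammingDist_comm, dH_flp]⟩
      by_cases heq : flp Mw w = flp i w'
      · exact Or.inr heq
      left
      have hnorm2 : hammingNorm (flp Mw w) = hammingNorm (flp i w') := by
        have := norm_flp_mem hMmem
        omega
      rw [hlt_iff_min hnorm2 heq]
      set e := (Dif (flp Mw w) (flp i w')).min' (Dif_nonempty heq) with he_def
      have hemem : e ∈ Dif (flp Mw w) (flp i w') := min'_mem _ _
      have hemin : ∀ j ∈ Dif (flp Mw w) (flp i w'), e ≤ j := fun j hj => min'_le _ _ hj
      by_contra hc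
      have hue : flp i w' e = 1 := z2other (mem_Dif.1 hemem) hc
      have hu'e : flp Mw w e = 0 := by
        rcases z2cases (flp Mw w e) with h0 | h1
        · exact h0
        · exact absurd h1 hc
      have hSu : Sx (flp i w') = (Sx w').erase i := Sx_flp_mem hiw'
      have hSu' : Sx (flp Mw w) = (Sx w).erase Mw := Sx_flp_mem hMmem
      have heSu : e ∈ (Sx w').erase i := by rw [← hSu]; exact mem_Sx.2 hue
      have heSw' : e ∈ Sx w' := mem_of_mem_erase heSu
      have hei : e ≠ i := (mem_erase.1 heSu).1
      have heSw : e ∉ Sx w ∨ e = Mw := by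
        by_contra hcc
        push_neg at hcc
        have : e ∈ (Sx w).erase Mw := mem_erase.2 ⟨hcc.2, hcc.1⟩
        rw [← hSu'] at this
        rw [mem_Sx.1 this] at hu'e
        exact absurd hu'e (by decide)
      rcases heSw with heSw | heM
      · have heD : e ∈ Dif w w' := Dif_symm_support.2 (Or.inr ⟨heSw, heSw'⟩)
        have hde : d < e := by
          have hle := hdmin e heD
          rcases lt_or_eq_of_le hle with h | h
          · exact h
          · exfalso
            exact heSw (mem_Sx.2 (by rw [← h]; exact hd))
        by_cases hdM : d = Mw
        · exfalso
          have hAB : (Sx w).erase Mw = (Sx w').erase i := by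
            apply eq_of_subset_of_card_le
            · intro a ha
              obtain ⟨haM, haw⟩ := mem_erase.1 ha
              have haltM : a < Mw := lt_of_le_of_ne (hMmax a haw) haM
              have hanotD : a ∉ Dif w w' := by
                intro hin
                have h3 := hdmin a hin
                rw [hdM] at h3
                exact absurd h3 (not_le.2 haltM)
              rw [mem_Dif] at hanotD
              push_neg at hanotD
              have haw' : a ∈ Sx w' := by
                rw [mem_Sx, ← hanotD]
                exact mem_Sx.1 haw
              refine mem_erase.2 ⟨?_, haw'⟩
              rintro rfl
              exact hiw haw
            · rw [card_erase_of_mem hiw', card_erase_of_mem hMmem,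
                  ← norm_eq_card_Sx, ← norm_eq_card_Sx]
              omega
          exact heq (Sx_inj (by rw [hSu', hSu, hAB]))
        · have hdSu' : d ∈ Sx (flp Mw w) := by
            rw [hSu']
            exact mem_erase.2 ⟨hdM, mem_Sx.2 hd⟩
          have hdnotD : d ∉ Dif (flp Mw w) (flp i w') := by
            intro hin
            exact absurd (hemin d hin) (not_le.2 hde)
          rw [mem_Dif] at hdnotD
          push_neg at hdnotD
          have hdSu : d ∈ Sx (flp i w') := by
            rw [mem_Sx, ← hdnotD]
            exact mem_Sx.1 hdSu'
          rw [hSu] at hdSu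
          have hdw' : d ∈ Sx w' := mem_of_mem_erase hdSu
          have := Dif_symm_support.1 hdmem
          rcases this with ⟨h1, h2⟩ | ⟨h1, h2⟩
          · exact h2 hdw'
          · exact h1 (mem_Sx.2 hd)
      · exfalso
        have hsub : (Sx w).erase Mw ⊆ Sx (flp i w') := by
          intro a ha
          obtain ⟨haM, haw⟩ := mem_erase.1 ha
          have haltM : a < Mw := lt_of_le_of_ne (hMmax a haw) haM
          have hanotD : a ∉ Dif (flp Mw w) (flp i w') := by
            intro hin
            have h3 := hemin a hin
            rw [heM] at h3
            exact absurd h3 (not_le.2 haltM)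
          rw [mem_Dif] at hanotD
          push_neg at hanotD
          rw [mem_Sx, ← hanotD]
          have : a ∈ Sx (flp Mw w) := by rw [hSu']; exact ha
          exact mem_Sx.1 this
        have hMwSu : Mw ∈ Sx (flp i w') := by rw [← heM]; exact mem_Sx.2 hue
        have hMwnotin : Mw ∉ (Sx w).erase Mw := notMem_erase _ _
        have hss : (Sx w).erase Mw ⊂ Sx (flp i w') :=
          ⟨hsub, fun h => hMwnotin (h hMwSu)⟩
        have hlt2 := card_lt_card hss
        rw [card_erase_of_mem hMmem, ← norm_eq_card_Sx] at hlt2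
        have h2 : (Sx (flp i w')).card = hammingNorm (flp i w') := (norm_eq_card_Sx _).symm
        omega

def M (A : Finset (ι → ZMod 2)) : Finset (ι → ZMod 2) :=
  univ.filter (fun v => ∃ u ∈ A, hammingDist u v ≤ 1)

lemma mem_M {A : Finset (ι → ZMod 2)} {v : ι → ZMod 2} :
    v ∈ M A ↔ ∃ u ∈ A, hammingDist u v ≤ 1 := by simp [M]

lemma subset_M {A : Finset (ι → ZMod 2)} : A ⊆ M A := by
  intro v hv
  exact mem_M.2 ⟨v, hv, by rw [dH_self]; omega⟩

lemma M_union (A B : Finset (ι → ZMod 2)) : M (A ∪ B) = M A ∪ M B := by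
  ext v
  simp only [mem_M, mem_union]
  constructor
  · rintro ⟨u, hu | hu, hd⟩
    exacts [Or.inl ⟨u, hu, hd⟩, Or.inr ⟨u, hu, hd⟩]
  · rintro (⟨u, hu, hd⟩ | ⟨u, hu, hd⟩)
    exacts [⟨u, Or.inl hu, hd⟩, ⟨u, Or.inr hu, hd⟩]

lemma M_mono {A B : Finset (ι → ZMod 2)} (h : A ⊆ B) : M A ⊆ M B := by
  intro v hv
  obtain ⟨u, hu, hd⟩ := mem_M.1 hv
  exact mem_M.2 ⟨u, h hu, hd⟩

lemma M_low {D : Finset (ι → ZMod 2)} (hD : Low D) : Low (M D) := by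
  intro w' hw' w hww
  obtain ⟨u, huD, hd⟩ := mem_M.1 hw'
  obtain ⟨u', hu', hd'⟩ := core_nbr hww hd
  rcases hu' with h | rfl
  · exact mem_M.2 ⟨u', hD huD h, hd'⟩
  · exact mem_M.2 ⟨u', huD, hd'⟩


section Sections

variable (i₀ : ι)

/-- restriction to the other coordinates -/
def res (x : ι → ZMod 2) : {j : ι // j ≠ i₀} → ZMod 2 := fun j => x j.val

/-- extension by a value at i₀ -/
def ext (ε : ZMod 2) (y : {j : ι // j ≠ i₀} → ZMod 2) : ι → ZMod 2 :=
  fun j => if h : j = i₀ then ε else y ⟨j, h⟩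

lemma ext_apply_i₀ (ε : ZMod 2) (y) : ext i₀ ε y i₀ = ε := by simp [ext]

lemma ext_apply_ne (ε : ZMod 2) (y) {j : ι} (h : j ≠ i₀) : ext i₀ ε y j = y ⟨j, h⟩ := by
  simp [ext, h]

lemma res_ext (ε : ZMod 2) (y) : res i₀ (ext i₀ ε y) = y := by
  funext j
  rw [res, ext_apply_ne i₀ ε y j.prop]

lemma ext_res {x : ι → ZMod 2} {ε : ZMod 2} (h : x i₀ = ε) : ext i₀ ε (res i₀ x) = x := by
  funext j
  by_cases hj : j = i₀
  · subst hj; rw [ext_apply_i₀, h]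
  · rw [ext_apply_ne i₀ _ _ hj]; rfl

lemma ext_inj {ε ε' : ZMod 2} {y y'} (h : ext i₀ ε y = ext i₀ ε' y') : ε = ε' ∧ y = y' := by
  constructor
  · have := congrFun h i₀
    rwa [ext_apply_i₀, ext_apply_i₀] at this
  · have := congrArg (res i₀) h
    rwa [res_ext, res_ext] at this

lemma Dif_ext_same (ε : ZMod 2) (y z) :
    Dif (ext i₀ ε y) (ext i₀ ε z) = (Dif y z).image Subtype.val := by
  ext j
  rw [mem_Dif, mem_image]
  by_cases hj : j = i₀
  · subst hj
    rw [ext_apply_i₀, ext_apply_i₀]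
    simp only [ne_eq, not_true_eq_false, false_iff, not_exists]
    rintro a ⟨-, ha⟩
    exact a.prop ha
  · rw [ext_apply_ne i₀ _ _ hj, ext_apply_ne i₀ _ _ hj]
    constructor
    · intro h
      exact ⟨⟨j, hj⟩, mem_Dif.2 h, rfl⟩
    · rintro ⟨a, ha, rfl⟩
      exact mem_Dif.1 ha

lemma Dif_ext_diff {ε ε' : ZMod 2} (hne : ε ≠ ε') (y z) :
    Dif (ext i₀ ε y) (ext i₀ ε' z) = insert i₀ ((Dif y z).image Subtype.val) := by
  ext j
  rw [mem_Dif, mem_insert, mem_image]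
  by_cases hj : j = i₀
  · subst hj
    rw [ext_apply_i₀, ext_apply_i₀]
    simp [hne]
  · rw [ext_apply_ne i₀ _ _ hj, ext_apply_ne i₀ _ _ hj]
    simp only [hj, false_or]
    constructor
    · intro h
      exact ⟨⟨j, hj⟩, mem_Dif.2 h, rfl⟩
    · rintro ⟨a, ha, rfl⟩
      exact mem_Dif.1 ha

lemma dH_ext_same (ε : ZMod 2) (y z) :
    hammingDist (ext i₀ ε y) (ext i₀ ε z) = hammingDist y z := by
  rw [hammingDist_eq_card_Dif, hammingDist_eq_card_Dif, Dif_ext_same,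
    card_image_of_injective _ Subtype.val_injective]

lemma dH_ext_diff {ε ε' : ZMod 2} (hne : ε ≠ ε') (y z) :
    hammingDist (ext i₀ ε y) (ext i₀ ε' z) = hammingDist y z + 1 := by
  rw [hammingDist_eq_card_Dif, hammingDist_eq_card_Dif, Dif_ext_diff i₀ hne,
    card_insert_of_notMem, card_image_of_injective _ Subtype.val_injective]
  rw [mem_image]
  rintro ⟨a, -, ha⟩
  exact a.prop ha

/-- norms -/
lemma norm_ext_zero (y) : hammingNorm (ext i₀ 0 y) = hammingNorm y := by
  have h0 : (0 : ι → ZMod 2) = ext i₀ 0 (0 : {j : ι // j ≠ i₀} → ZMod 2) := by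
    funext j
    by_cases hj : j = i₀
    · subst hj; rw [ext_apply_i₀]; rfl
    · rw [ext_apply_ne i₀ _ _ hj]; rfl
  rw [← hammingDist_zero_right, ← hammingDist_zero_right, hammingDist_comm,
    hammingDist_comm y, h0, dH_ext_same]

lemma norm_ext_one (y) : hammingNorm (ext i₀ 1 y) = hammingNorm y + 1 := by
  have h0 : (0 : ι → ZMod 2) = ext i₀ 0 (0 : {j : ι // j ≠ i₀} → ZMod 2) := by
    funext j
    by_cases hj : j = i₀
    · subst hj; rw [ext_apply_i₀]; rfl
    · rw [ext_apply_ne i₀ _ _ hj]; rfl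
  rw [← hammingDist_zero_right, ← hammingDist_zero_right, hammingDist_comm,
    hammingDist_comm y, h0, dH_ext_diff i₀ (by decide)]

lemma norm_ext (ε : ZMod 2) (y z) :
    hammingNorm (ext i₀ ε y) < hammingNorm (ext i₀ ε z) ↔ hammingNorm y < hammingNorm z := by
  rcases z2cases ε with rfl | rfl
  · rw [norm_ext_zero, norm_ext_zero]
  · rw [norm_ext_one, norm_ext_one]; omega

lemma norm_ext_eq (ε : ZMod 2) (y z) :
    hammingNorm (ext i₀ ε y) = hammingNorm (ext i₀ ε z) ↔ hammingNorm y = hammingNorm z := by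
  rcases z2cases ε with rfl | rfl
  · rw [norm_ext_zero, norm_ext_zero]
  · rw [norm_ext_one, norm_ext_one]; omega

/-- the Hales order is compatible with sections -/
lemma hlt_ext (ε : ZMod 2) (y z) : hlt (ext i₀ ε y) (ext i₀ ε z) ↔ hlt y z := by
  constructor
  · rintro (h | ⟨hn, i, hne, h1, hb⟩)
    · exact Or.inl ((norm_ext i₀ ε y z).1 h)
    · right
      refine ⟨(norm_ext_eq i₀ ε y z).1 hn, ?_⟩
      have hi : i ≠ i₀ := by
        rintro rfl
        rw [ext_apply_i₀, ext_apply_i₀] at hne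
        exact hne rfl
      refine ⟨⟨i, hi⟩, ?_, ?_, ?_⟩
      · rwa [ext_apply_ne i₀ _ _ hi, ext_apply_ne i₀ _ _ hi] at hne
      · rwa [ext_apply_ne i₀ _ _ hi] at h1
      · intro j hj
        have := hb j.val hj
        rwa [ext_apply_ne i₀ _ _ j.prop, ext_apply_ne i₀ _ _ j.prop] at this
  · rintro (h | ⟨hn, i, hne, h1, hb⟩)
    · exact Or.inl ((norm_ext i₀ ε y z).2 h)
    · right
      refine ⟨(norm_ext_eq i₀ ε y z).2 hn, i.val, ?_, ?_, ?_⟩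
      · rwa [ext_apply_ne i₀ _ _ i.prop, ext_apply_ne i₀ _ _ i.prop]
      · rwa [ext_apply_ne i₀ _ _ i.prop]
      · intro j hj
        by_cases hji : j = i₀
        · subst hji; rw [ext_apply_i₀, ext_apply_i₀]
        · rw [ext_apply_ne i₀ _ _ hji, ext_apply_ne i₀ _ _ hji]
          exact hb ⟨j, hji⟩ hj

/-- section of a set -/
def sec (ε : ZMod 2) (A : Finset (ι → ZMod 2)) : Finset ({j : ι // j ≠ i₀} → ZMod 2) :=
  (A.filter (fun v => v i₀ = ε)).image (res i₀)

lemma mem_sec {ε : ZMod 2} {A : Finset (ι → ZMod 2)} {y} :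
    y ∈ sec i₀ ε A ↔ ext i₀ ε y ∈ A := by
  rw [sec, mem_image]
  constructor
  · rintro ⟨v, hv, rfl⟩
    obtain ⟨hvA, hvε⟩ := mem_filter.1 hv
    rwa [ext_res i₀ hvε]
  · intro h
    exact ⟨ext i₀ ε y, mem_filter.2 ⟨h, ext_apply_i₀ i₀ ε y⟩, res_ext i₀ ε y⟩

lemma card_sec (ε : ZMod 2) (A : Finset (ι → ZMod 2)) :
    (sec i₀ ε A).card = (A.filter (fun v => v i₀ = ε)).card := by
  apply card_image_of_injOn
  intro u hu v hv huv
  obtain ⟨-, hu2⟩ := mem_filter.1 hu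
  obtain ⟨-, hv2⟩ := mem_filter.1 hv
  rw [← ext_res i₀ hu2, ← ext_res i₀ hv2, huv]

lemma card_eq_sec_add (A : Finset (ι → ZMod 2)) :
    A.card = (sec i₀ 0 A).card + (sec i₀ 1 A).card := by
  rw [card_sec, card_sec]
  rw [← Finset.card_filter_add_card_filter_not (p := fun v => v i₀ = 0)]
  have hf : A.filter (fun a => ¬ a i₀ = 0) = A.filter (fun v => v i₀ = 1) :=
    filter_congr (fun v _ => by simpa using z2ne0)
  rw [hf]

lemma sum_rk_eq_sec (A : Finset (ι → ZMod 2)) :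
    ∑ x ∈ A, rk x = (∑ y ∈ sec i₀ 0 A, rk (ext i₀ 0 y)) + (∑ y ∈ sec i₀ 1 A, rk (ext i₀ 1 y)) := by
  have h0 : ∀ ε : ZMod 2, ∑ y ∈ sec i₀ ε A, rk (ext i₀ ε y) = ∑ x ∈ A.filter (fun v => v i₀ = ε), rk x := by
    intro ε
    rw [sec, sum_image]
    · apply sum_congr rfl
      intro x hx
      rw [ext_res i₀ (mem_filter.1 hx).2]
    · intro u hu v hv huv
      rw [← ext_res i₀ (mem_filter.1 hu).2, ← ext_res i₀ (mem_filter.1 hv).2, huv]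
  have hf : A.filter (fun a => ¬ a i₀ = 0) = A.filter (fun v => v i₀ = 1) :=
    filter_congr (fun v _ => by simpa using z2ne0)
  rw [h0, h0, ← Finset.sum_filter_add_sum_filter_not A (fun v => v i₀ = 0), hf]

/-- the compression at i₀ -/
def Cp (A : Finset (ι → ZMod 2)) : Finset (ι → ZMod 2) :=
  ((init (sec i₀ 0 A).card).image (ext i₀ 0)) ∪ ((init (sec i₀ 1 A).card).image (ext i₀ 1))

lemma sec_Cp (ε : ZMod 2) (A : Finset (ι → ZMod 2)) :
    sec i₀ ε (Cp i₀ A) = init (sec i₀ ε A).card := by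
  ext y
  rw [mem_sec, Cp, mem_union, mem_image, mem_image]
  constructor
  · rintro (⟨z, hz, hze⟩ | ⟨z, hz, hze⟩)
    · obtain ⟨h1, h2⟩ := ext_inj i₀ hze
      subst h2
      rcases z2cases ε with rfl | rfl
      · exact hz
      · exact absurd h1 (by decide)
    · obtain ⟨h1, h2⟩ := ext_inj i₀ hze
      subst h2
      rcases z2cases ε with rfl | rfl
      · exact absurd h1 (by decide)
      · exact hz
  · intro h
    rcases z2cases ε with rfl | rfl
    · exact Or.inl ⟨y, h, rfl⟩
    · exact Or.inr ⟨y, h, rfl⟩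

lemma card_Cp (A : Finset (ι → ZMod 2)) : (Cp i₀ A).card = A.card := by
  rw [card_eq_sec_add i₀ (Cp i₀ A), sec_Cp, sec_Cp, card_eq_sec_add i₀ A]
  rw [card_init_of_le (card_le_univ _), card_init_of_le (card_le_univ _)]

/-- sections of neighbourhoods -/
lemma sec_M (ε : ZMod 2) (A : Finset (ι → ZMod 2)) :
    sec i₀ ε (M A) = M (sec i₀ ε A) ∪ sec i₀ (ε + 1) A := by
  ext y
  rw [mem_sec, mem_M, mem_union, mem_M]
  constructor
  · rintro ⟨u, huA, hd⟩
    by_cases hu : u i₀ = ε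
    · left
      refine ⟨res i₀ u, (mem_sec i₀).2 (by rwa [ext_res i₀ hu]), ?_⟩
      rw [← ext_res i₀ hu] at hd
      rwa [dH_ext_same] at hd
    · right
      have hu1 : u i₀ = ε + 1 := z2c (Ne.symm hu)
      rw [← ext_res i₀ hu1] at hd
      rw [dH_ext_diff i₀ z2d] at hd
      have h00 : hammingDist (res i₀ u) y = 0 := by omega
      have heq : res i₀ u = y := by
        rwa [hammingDist_eq_zero] at h00
      rw [mem_sec i₀, ← heq]
      rwa [ext_res i₀ hu1]
  · rintro (⟨z, hz, hd⟩ | h)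
    · exact ⟨ext i₀ ε z, (mem_sec i₀).1 hz, by rwa [dH_ext_same]⟩
    · refine ⟨ext i₀ (ε + 1) y, (mem_sec i₀).1 h, ?_⟩
      rw [dH_ext_diff i₀ z2d, hammingDist_self]


lemma ext_injective (ε : ZMod 2) : Function.Injective (ext i₀ ε) :=
  fun _ _ h => (ext_inj i₀ h).2

lemma low_union_card {A B : Finset (ι → ZMod 2)}
    (hA : Low A) (hB : Low B) : (A ∪ B).card = max A.card B.card := by
  rcases low_nested hA hB with h | h
  · rw [union_eq_right.2 h, max_eq_right (card_le_card h)]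
  · rw [union_eq_left.2 h, max_eq_left (card_le_card h)]

lemma card_M_Cp_le
    (IH : ∀ B : Finset ({j : ι // j ≠ i₀} → ZMod 2), (M (init (ι := {j : ι // j ≠ i₀}) B.card)).card ≤ (M B).card)
    (A : Finset (ι → ZMod 2)) : (M (Cp i₀ A)).card ≤ (M A).card := by
  rw [card_eq_sec_add i₀ (M (Cp i₀ A)), card_eq_sec_add i₀ (M A)]
  have key : ∀ ε : ZMod 2, (sec i₀ ε (M (Cp i₀ A))).card ≤ (sec i₀ ε (M A)).card := by
    intro ε
    rw [sec_M, sec_M, sec_Cp, sec_Cp]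
    have hlow1 : Low (M (init (ι := {j : ι // j ≠ i₀}) (sec i₀ ε A).card)) := M_low (low_init _)
    have hlow2 : Low (init (ι := {j : ι // j ≠ i₀}) (sec i₀ (ε+1) A).card) := low_init _
    rw [low_union_card hlow1 hlow2, card_init_of_le (card_le_univ _)]
    have h1 : (M (sec i₀ ε A)).card ≤ (M (sec i₀ ε A) ∪ sec i₀ (ε+1) A).card :=
      card_le_card subset_union_left
    have h2 : (sec i₀ (ε+1) A).card ≤ (M (sec i₀ ε A) ∪ sec i₀ (ε+1) A).card :=
      card_le_card subset_union_right
    exact max_le (le_trans (IH (sec i₀ ε A)) h1) h2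
  exact Nat.add_le_add (key 0) (key 1)

lemma eq_of_sec_eq {A B : Finset (ι → ZMod 2)}
    (h0 : sec i₀ 0 A = sec i₀ 0 B) (h1 : sec i₀ 1 A = sec i₀ 1 B) : A = B := by
  ext v
  rcases z2cases (v i₀) with hv | hv
  · rw [← ext_res i₀ hv, ← mem_sec i₀, ← mem_sec i₀, h0]
  · rw [← ext_res i₀ hv, ← mem_sec i₀, ← mem_sec i₀, h1]

def mu (A : Finset (ι → ZMod 2)) : ℕ := ∑ x ∈ A, rk x

lemma mu_Cp_lt (A : Finset (ι → ZMod 2)) (hne : Cp i₀ A ≠ A) : mu (Cp i₀ A) < mu A := by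
  have hkey : ∀ ε : ZMod 2,
      ((∑ y ∈ sec i₀ ε (Cp i₀ A), rk (ext i₀ ε y)) ≤ ∑ y ∈ sec i₀ ε A, rk (ext i₀ ε y)) ∧
      (sec i₀ ε (Cp i₀ A) ≠ sec i₀ ε A →
        (∑ y ∈ sec i₀ ε (Cp i₀ A), rk (ext i₀ ε y)) < ∑ y ∈ sec i₀ ε A, rk (ext i₀ ε y)) := by
    intro ε
    by_cases hEq : sec i₀ ε (Cp i₀ A) = sec i₀ ε A
    · exact ⟨le_of_eq (by rw [hEq]), fun h => absurd hEq h⟩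
    · have hstrict : (∑ y ∈ sec i₀ ε (Cp i₀ A), rk (ext i₀ ε y)) <
          ∑ y ∈ sec i₀ ε A, rk (ext i₀ ε y) := by
        have hsum := sum_rk_lt (F := univ.image (ext i₀ ε))
          ((sec i₀ ε A).image (ext i₀ ε)) ((sec i₀ ε (Cp i₀ A)).image (ext i₀ ε))
          (image_subset_image (subset_univ _)) (image_subset_image (subset_univ _))
          ?_ ?_ ?_
        · rwa [sum_image (fun a _ b _ h => ext_injective i₀ ε h),
            sum_image (fun a _ b _ h => ext_injective i₀ ε h)] at hsum
        · intro x hx y hy hyx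
          obtain ⟨t, ht, rfl⟩ := mem_image.1 hx
          obtain ⟨z, hz, rfl⟩ := mem_image.1 hy
          rw [hlt_ext] at hyx
          apply mem_image_of_mem
          rw [sec_Cp] at ht ⊢
          exact low_init _ ht hyx
        · rw [card_image_of_injective _ (ext_injective i₀ ε),
            card_image_of_injective _ (ext_injective i₀ ε), sec_Cp,
            card_init_of_le (card_le_univ _)]
        · intro hc
          exact hEq (Finset.image_injective (ext_injective i₀ ε) hc)
      exact ⟨le_of_lt hstrict, fun _ => hstrict⟩
  have hex : ∃ ε : ZMod 2, sec i₀ ε (Cp i₀ A) ≠ sec i₀ ε A := by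
    by_contra hc
    push_neg at hc
    exact hne (eq_of_sec_eq i₀ (hc 0) (hc 1))
  obtain ⟨ε₀, hε₀⟩ := hex
  rw [mu, mu, sum_rk_eq_sec i₀, sum_rk_eq_sec i₀]
  rcases z2cases ε₀ with rfl | rfl
  · have ha := (hkey 0).2 hε₀
    have hb := (hkey 1).1
    omega
  · have ha := (hkey 1).2 hε₀
    have hb := (hkey 0).1
    omega

/-- when every compression fixes A, violating pairs differ in every coordinate -/
lemma fixed_diff_all (A : Finset (ι → ZMod 2)) (hfix : ∀ i : ι, Cp i A = A)
    {x y : ι → ZMod 2} (hx : x ∉ A) (hy : y ∈ A) (hxy : hlt x y) : ∀ i : ι, x i ≠ y i := by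
  intro i hc
  set ε := x i with hε
  have hyi : y i = ε := hc.symm
  have hsecA : sec i ε A = init (sec i ε A).card := by
    conv_lhs => rw [← hfix i]
    rw [sec_Cp]
  have hyA : res i y ∈ sec i ε A := (mem_sec i).2 (by rwa [ext_res i hyi])
  have hlt' : hlt (res i x) (res i y) := by
    rw [← hlt_ext i ε]
    rwa [ext_res i hε.symm, ext_res i hyi]
  have hxA : res i x ∈ sec i ε A := by
    rw [hsecA] at hyA ⊢
    exact low_init _ hyA hlt'
  have := (mem_sec i).1 hxA
  rw [ext_res i hε.symm] at this
  exact hx this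

end Sections

lemma hlt_witness {x y : ι → ZMod 2} (hn : hammingNorm x = hammingNorm y) {i : ι}
    (hxi : x i = 1) (hyi : y i = 0) (hb : ∀ j : ι, j < i → x j = y j) : hlt x y :=
  Or.inr ⟨hn, i, by rw [hxi, hyi]; decide, hxi, hb⟩

def cpl (x : ι → ZMod 2) : ι → ZMod 2 := fun j => x j + 1

lemma cpl_apply (x : ι → ZMod 2) (j : ι) : cpl x j = x j + 1 := rfl

lemma Sx_cpl (x : ι → ZMod 2) : Sx (cpl x) = (Sx x)ᶜ := by
  ext j
  rw [mem_Sx, mem_compl, mem_Sx, cpl_apply]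
  generalize x j = a
  revert a; decide

lemma norm_cpl (x : ι → ZMod 2) :
    hammingNorm (cpl x) = Fintype.card ι - hammingNorm x := by
  rw [norm_eq_card_Sx, norm_eq_card_Sx, Sx_cpl, card_compl]

lemma mem_I {x u : ι → ZMod 2} : u ∈ (init (rk x) : Finset (ι → ZMod 2)) ↔ hlt u x := by
  rw [mem_init, rk_lt_iff]

lemma flp_injOn {z : ι → ZMod 2} {i k : ι} (h : flp i z = flp k z) : i = k := by
  by_contra hne
  have h1 := congrFun h i
  rw [flp_apply_self, flp_apply_ne (Ne.symm ?_) z] at h1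
  · exact z2d h1
  · exact fun hc => hne hc.symm

lemma mem_M_singleton {z v : ι → ZMod 2} : v ∈ M {z} ↔ v = z ∨ ∃ i, v = flp i z := by
  rw [mem_M]
  constructor
  · rintro ⟨u, hu, hd⟩
    rw [mem_singleton] at hu
    subst hu
    rcases dist_le_one_iff.1 hd with h | h
    · exact Or.inl h.symm
    · exact Or.inr h
  · rintro (rfl | ⟨i, rfl⟩)
    · exact ⟨v, mem_singleton_self v, by rw [dist_le_one_iff]; exact Or.inl rfl⟩
    · exact ⟨z, mem_singleton_self z, by rw [dH_flp]⟩

lemma card_M_singleton (z : ι → ZMod 2) : (M {z}).card = Fintype.card ι + 1 := by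
  have hM : M {z} = insert z (univ.image (fun i => flp i z)) := by
    ext v
    rw [mem_M_singleton, mem_insert, mem_image]
    constructor
    · rintro (rfl | ⟨i, rfl⟩)
      · exact Or.inl rfl
      · exact Or.inr ⟨i, mem_univ i, rfl⟩
    · rintro (rfl | ⟨i, -, rfl⟩)
      · exact Or.inl rfl
      · exact Or.inr ⟨i, rfl⟩
  rw [hM, card_insert_of_notMem, card_image_of_injOn, card_univ]
  · intro a _ b _ hab
    exact flp_injOn hab
  · rw [mem_image]
    rintro ⟨i, -, hi⟩
    have := congrFun hi i
    rw [flp_apply_self] at this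
    exact z2d this

lemma SL1 {x u : ι → ZMod 2} {o : ι} (ho : x o = 1) (hmin : ∀ j, o ≤ j)
    (hu : hlt u x) (hn : hammingNorm u = hammingNorm x) : u o = 1 := by
  rcases hu with h | ⟨-, i, hne, h1, hb⟩
  · omega
  · rcases (hmin i).lt_or_eq with h | h
    · rw [hb o h]; exact ho
    · exfalso
      have hxi := z2other' hne h1
      rw [← h, ho] at hxi
      exact absurd hxi (by decide)

lemma SL2 {x u : ι → ZMod 2} {Mx : ι}
    (hint : Sx x = univ.filter (fun j => j ≤ Mx)) (hu : hlt u x) :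
    hammingNorm u < hammingNorm x := by
  rcases hu with h | ⟨hn, i, hne, h1, hb⟩
  · exact h
  · exfalso
    have hxi : x i = 0 := z2other' hne h1
    have hiM : ¬ i ≤ Mx := by
      intro hle
      have hmem : i ∈ Sx x := by rw [hint, mem_filter]; exact ⟨mem_univ i, hle⟩
      rw [mem_Sx] at hmem
      rw [hmem] at hxi
      exact absurd hxi (by decide)
    have hsub : insert i (Sx x) ⊆ Sx u := by
      intro a ha
      rcases mem_insert.1 ha with rfl | ha
      · exact mem_Sx.2 h1
      · have haM : a ≤ Mx := by rw [hint, mem_filter] at ha; exact ha.2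
        have hai : a < i := lt_of_le_of_lt haM (not_le.1 hiM)
        rw [mem_Sx, hb a hai]
        exact mem_Sx.1 ha
    have hcard := card_le_card hsub
    rw [card_insert_of_notMem] at hcard
    · rw [← norm_eq_card_Sx, ← norm_eq_card_Sx] at hcard
      omega
    · intro hmem
      rw [mem_Sx] at hmem
      rw [hmem] at hxi
      exact absurd hxi (by decide)

lemma SL3 {x v : ι → ZMod 2} {o : ι} (ho : x o = 1) (hmin : ∀ j, o ≤ j)
    (hvo : v o = 0) (hnv : hammingNorm v = hammingNorm x + 1) :
    v ∉ M (init (rk x)) := by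
  intro hv
  obtain ⟨u, huI, hd⟩ := mem_M.1 hv
  have hux : hlt u x := mem_I.1 huI
  have h1 : hammingNorm u ≤ hammingNorm x := norm_le_of_hlt hux
  rcases dist_le_one_iff.1 hd with heq | ⟨k, rfl⟩
  · subst heq; omega
  · by_cases hk : k ∈ Sx u
    · have := norm_flp_mem hk; omega
    · have hnu : hammingNorm u = hammingNorm x := by
        have := norm_flp_not_mem hk; omega
      have huo : u o = 1 := SL1 ho hmin hux hnu
      by_cases hko : o = k
      · rw [← hko] at hk
        exact hk (mem_Sx.2 huo)
      · rw [flp_apply_ne hko, huo] at hvo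
        exact absurd hvo (by decide)

/-- elements of the neighbourhood of an initial segment have small norm -/
lemma J_norm_le {x v : ι → ZMod 2} (hv : v ∈ M (init (rk x))) :
    hammingNorm v ≤ hammingNorm x + 1 := by
  obtain ⟨u, huI, hd⟩ := mem_M.1 hv
  have h1 : hammingNorm u ≤ hammingNorm x := norm_le_of_hlt (mem_I.1 huI)
  have h2 : hammingNorm v ≤ hammingNorm u + hammingDist u v := by
    have := hammingDist_triangle v u (0 : ι → ZMod 2)
    rw [hammingDist_zero_right, hammingDist_zero_right, hammingDist_comm] at this
    omega
  omega

/-- main counting lemma for the exceptional fixed sets -/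
lemma exceptional (x : ι → ZMod 2) (hx1 : 1 ≤ hammingNorm x) (hxc : hlt x (cpl x)) :
    (M (insert x (init (ι := ι) (rk x)))).card ≤ (M (insert (cpl x) (init (ι := ι) (rk x)))).card := by
  classical
  set I : Finset (ι → ZMod 2) := init (ι := ι) (rk x) with hI
  set J : Finset (ι → ZMod 2) := M I with hJdef
  set ℓ : ℕ := hammingNorm x with hℓ
  set m : ℕ := Fintype.card ι with hm
  have hℓm : ℓ ≤ m := by rw [hℓ, hm]; exact hammingNorm_le_card_fintype
  have hnormc : hammingNorm (cpl x) = m - ℓ := norm_cpl x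
  have h2ℓ : 2 * ℓ ≤ m := by
    have := norm_le_of_hlt hxc
    omega
  have hSne : (Sx x).Nonempty := by
    rw [← card_pos, ← norm_eq_card_Sx]; omega
  set Mx : ι := (Sx x).max' hSne with hMx
  have hMmem : Mx ∈ Sx x := (Sx x).max'_mem hSne
  have hMmax : ∀ j ∈ Sx x, j ≤ Mx := fun j hj => le_max' _ _ hj
  have hιne : Nonempty ι := ⟨Mx⟩
  have huniv_ne : (univ : Finset ι).Nonempty := univ_nonempty
  set o : ι := univ.min' huniv_ne with ho_def
  have homin : ∀ j : ι, o ≤ j := fun j => min'_le _ _ (mem_univ j)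
  -- reduce to comparing  M{x} \ J  with  M{cpl x} \ J
  have hkey : ∀ z : ι → ZMod 2, (M (insert z I)).card = (M {z} \ J).card + J.card := by
    intro z
    rw [insert_eq, M_union]
    exact (card_sdiff_add_card _ _).symm
  rw [hkey, hkey]
  have hmain : (M {x} \ J).card ≤ (M {cpl x} \ J).card := by
    -- the count t of coordinates ≤ Mx, and β of coordinates > Mx
    set t : ℕ := #(univ.filter (fun j : ι => j ≤ Mx)) with ht
    set β : ℕ := #(univ.filter (fun j : ι => Mx < j)) with hβ
    have htβ : t + β = m := by
      have h1 := card_filter_add_card_filter_not (s := (univ : Finset ι))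
        (p := fun j : ι => j ≤ Mx)
      have h2 : univ.filter (fun j : ι => ¬ j ≤ Mx) = univ.filter (fun j : ι => Mx < j) :=
        filter_congr (fun j _ => by simp [not_le])
      rw [h2] at h1
      rw [ht, hβ, hm, ← card_univ]
      exact h1
    have htℓ : ℓ ≤ t := by
      rw [hℓ, norm_eq_card_Sx, ht]
      apply card_le_card
      intro j hj
      rw [mem_filter]
      exact ⟨mem_univ j, hMmax j hj⟩
    -- facts about membership of neighbours of x in J
    have hxJ : x ∈ J := by
      rw [hJdef, mem_M]
      refine ⟨flp Mx x, ?_, by rw [hammingDist_comm, dH_flp]⟩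
      rw [hI, mem_I]
      apply hlt_of_norm_lt
      have := norm_flp_mem hMmem
      omega
    have hdownJ : ∀ k ∈ Sx x, flp k x ∈ J := by
      intro k hk
      apply subset_M
      rw [hI, mem_I]
      apply hlt_of_norm_lt
      have := norm_flp_mem hk
      omega
    have hupJ : ∀ j, j ∉ Sx x → j < Mx → flp j x ∈ J := by
      intro j hj hjM
      rw [hJdef, mem_M]
      refine ⟨flp Mx (flp j x), ?_, by rw [hammingDist_comm, dH_flp]⟩
      rw [hI, mem_I]
      have hMx' : Mx ∈ Sx (flp j x) := by
        rw [mem_Sx, flp_apply_ne (Ne.symm (ne_of_lt hjM)), ← mem_Sx]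
        exact hMmem
      have hxj : x j = 0 := by
        rcases z2cases (x j) with h0 | h1
        · exact h0
        · exact absurd (mem_Sx.2 h1) hj
      have hnorm : hammingNorm (flp Mx (flp j x)) = ℓ := by
        have h1 := norm_flp_mem hMx'
        have h2 := norm_flp_not_mem hj
        omega
      apply hlt_witness hnorm (i := j)
      · rw [flp_apply_ne (ne_of_lt hjM), flp_apply_self, hxj]
        decide
      · exact hxj
      · intro k hk
        rw [flp_apply_ne (ne_of_lt (hk.trans hjM)), flp_apply_ne (ne_of_lt hk)]
    -- M{x} \ J is inside flips at coordinates above Mx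
    have hA : (M {x} \ J).card ≤ β := by
      have hsub : M {x} \ J ⊆ (univ.filter (fun j : ι => Mx < j)).image (fun j => flp j x) := by
        intro v hv
        obtain ⟨hvM, hvJ⟩ := mem_sdiff.1 hv
        rcases mem_M_singleton.1 hvM with rfl | ⟨j, rfl⟩
        · exact absurd hxJ hvJ
        · by_cases hj : j ∈ Sx x
          · exact absurd (hdownJ j hj) hvJ
          · rcases lt_trichotomy j Mx with h | h | h
            · exact absurd (hupJ j hj h) hvJ
            · exact absurd (h ▸ hMmem) hj
            · exact mem_image.2 ⟨j, mem_filter.2 ⟨mem_univ j, h⟩, rfl⟩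
      calc (M {x} \ J).card ≤ _ := card_le_card hsub
        _ ≤ β := by rw [hβ]; exact card_image_le
    -- now lower-bound the other side, by cases on the regimes
    -- norms of neighbours of cpl x
    have hup_norm : ∀ j ∈ Sx x, hammingNorm (flp j (cpl x)) = m - ℓ + 1 := by
      intro j hj
      have : j ∉ Sx (cpl x) := by
        rw [Sx_cpl, mem_compl]
        simpa using hj
      rw [norm_flp_not_mem this, hnormc]
    have hdown_norm : ∀ k, k ∉ Sx x → hammingNorm (flp k (cpl x)) + 1 = m - ℓ := by
      intro k hk
      have : k ∈ Sx (cpl x) := by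
        rw [Sx_cpl, mem_compl]
        simpa using hk
      rw [norm_flp_mem this, hnormc]
    have hups_inj : Set.InjOn (fun j => flp j (cpl x)) (univ.filter (fun j : ι => True) : Finset ι) := by
      intro a _ b _ hab
      exact flp_injOn hab
    -- case split on regimes
    rcases Nat.lt_or_ge m (2*ℓ + 1) with hreg | hreg
    · -- m = 2ℓ : the same-norm case; here o ∈ Sx x necessarily
      have hmeq : m = 2*ℓ := by omega
      have hxo : x o = 1 := by
        rcases hxc with h | ⟨-, i, hne, h1, hb⟩
        · rw [hnormc] at h; omega
        · have : i = o := by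
            apply le_antisymm ?_ (homin i)
            by_contra hc
            push_neg at hc
            have := hb o hc
            rw [cpl_apply] at this
            exact z2d this.symm
          rw [← this]; exact h1
      by_cases hto : t = ℓ
      · -- interval case : Sx x = {j ≤ Mx}
        have hint : Sx x = univ.filter (fun j : ι => j ≤ Mx) := by
          apply eq_of_subset_of_card_le
          · intro j hj
            exact mem_filter.2 ⟨mem_univ j, hMmax j hj⟩
          · rw [← ht, hto, ← norm_eq_card_Sx]
        have hJnorm' : ∀ v ∈ J, hammingNorm v ≤ ℓ := by
          intro v hv
          obtain ⟨u, huI, hd⟩ := mem_M.1 hv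
          have h1 : hammingNorm u < ℓ := SL2 hint (mem_I.1 huI)
          have h2 : hammingNorm v ≤ hammingNorm u + hammingDist u v := by
            have := hammingDist_triangle v u (0 : ι → ZMod 2)
            rw [hammingDist_zero_right, hammingDist_zero_right, hammingDist_comm] at this
            omega
          omega
        -- W := ups of cpl x
        have hW : (Sx x).image (fun j => flp j (cpl x)) ⊆ M {cpl x} \ J := by
          intro v hv
          obtain ⟨j, hj, rfl⟩ := mem_image.1 hv
          rw [mem_sdiff]
          constructor
          · rw [mem_M_singleton]; exact Or.inr ⟨j, rfl⟩
          · intro hvJ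
            have := hJnorm' _ hvJ
            rw [hup_norm j hj] at this
            omega
        calc (M {x} \ J).card ≤ β := hA
          _ ≤ ((Sx x).image (fun j => flp j (cpl x))).card := by
              rw [card_image_of_injOn (fun a _ b _ hab => flp_injOn hab), ← norm_eq_card_Sx]
              omega
          _ ≤ (M {cpl x} \ J).card := card_le_card hW
      · -- t ≥ ℓ + 1 : use ups except o
        have htℓ1 : ℓ + 1 ≤ t := lt_of_le_of_ne htℓ (Ne.symm hto)
        have hW : ((Sx x).erase o).image (fun j => flp j (cpl x)) ⊆ M {cpl x} \ J := by
          intro v hv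
          obtain ⟨j, hj, rfl⟩ := mem_image.1 hv
          obtain ⟨hjo, hjS⟩ := mem_erase.1 hj
          rw [mem_sdiff]
          constructor
          · rw [mem_M_singleton]; exact Or.inr ⟨j, rfl⟩
          · apply SL3 hxo homin
            · rw [flp_apply_ne, cpl_apply, hxo]
              · decide
              · exact fun hc => hjo hc.symm
            · rw [hup_norm j hjS]; omega
        calc (M {x} \ J).card ≤ β := hA
          _ ≤ (((Sx x).erase o).image (fun j => flp j (cpl x))).card := by
              rw [card_image_of_injOn (fun a _ b _ hab => flp_injOn hab),
                card_erase_of_mem (mem_Sx.2 hxo), ← norm_eq_card_Sx]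
              omega
          _ ≤ (M {cpl x} \ J).card := card_le_card hW
    · rcases Nat.lt_or_ge m (2*ℓ + 3) with hreg2 | hreg2
      · -- m = 2ℓ+1 or 2ℓ+2
        by_cases hxo : x o = 1
        · -- o ∈ Sx x
          rcases Nat.lt_or_ge m (2*ℓ + 2) with hreg3 | hreg3
          · -- m = 2ℓ+1 : W := insert (cpl x) (ups)
            have hmeq : m = 2*ℓ + 1 := by omega
            have hW : insert (cpl x) ((Sx x).image (fun j => flp j (cpl x))) ⊆ M {cpl x} \ J := by
              intro v hv
              rcases mem_insert.1 hv with rfl | hv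
              · rw [mem_sdiff]
                refine ⟨subset_M (mem_singleton_self _), ?_⟩
                apply SL3 hxo homin
                · rw [cpl_apply, hxo]; decide
                · rw [hnormc]; omega
              · obtain ⟨j, hj, rfl⟩ := mem_image.1 hv
                rw [mem_sdiff]
                constructor
                · rw [mem_M_singleton]; exact Or.inr ⟨j, rfl⟩
                · intro hvJ
                  have := J_norm_le hvJ
                  rw [hup_norm j hj] at this
                  omega
            calc (M {x} \ J).card ≤ β := hA
              _ ≤ (insert (cpl x) ((Sx x).image (fun j => flp j (cpl x)))).card := by
                  rw [card_insert_of_notMem, card_image_of_injOn (fun a _ b _ hab => flp_injOn hab),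
                    ← norm_eq_card_Sx]
                  · omega
                  · rw [mem_image]
                    rintro ⟨j, -, hj⟩
                    have := congrFun hj j
                    rw [flp_apply_self] at this
                    exact z2d this
              _ ≤ (M {cpl x} \ J).card := card_le_card hW
          · -- m = 2ℓ+2 : whole neighbourhood of cpl x is outside J
            have hmeq : m = 2*ℓ + 2 := by omega
            have hW : M {cpl x} ⊆ M {cpl x} \ J := by
              intro v hv
              rw [mem_sdiff]
              refine ⟨hv, ?_⟩
              rcases mem_M_singleton.1 hv with rfl | ⟨k, rfl⟩
              · intro hvJ
                have := J_norm_le hvJ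
                rw [hnormc] at this
                omega
              · by_cases hk : k ∈ Sx x
                · intro hvJ
                  have := J_norm_le hvJ
                  rw [hup_norm k hk] at this
                  omega
                · apply SL3 hxo homin
                  · have hko : k ≠ o := by
                      rintro rfl
                      exact hk (mem_Sx.2 hxo)
                    rw [flp_apply_ne (fun hc => hko hc.symm), cpl_apply, hxo]
                    decide
                  · have := hdown_norm k hk
                    omega
            calc (M {x} \ J).card ≤ β := hA
              _ ≤ (M {cpl x}).card := by rw [card_M_singleton]; omega
              _ ≤ (M {cpl x} \ J).card := card_le_card hW
        · -- o ∉ Sx x : t ≥ ℓ + 1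
          have hoS : o ∉ Sx x := fun h => hxo (mem_Sx.1 h)
          have htℓ1 : ℓ + 1 ≤ t := by
            have hsub : insert o (Sx x) ⊆ univ.filter (fun j : ι => j ≤ Mx) := by
              intro j hj
              rcases mem_insert.1 hj with rfl | hj
              · exact mem_filter.2 ⟨mem_univ _, homin Mx⟩
              · exact mem_filter.2 ⟨mem_univ j, hMmax j hj⟩
            have := card_le_card hsub
            rw [card_insert_of_notMem hoS, ← norm_eq_card_Sx] at this
            omega
          rcases Nat.lt_or_ge m (2*ℓ + 2) with hreg3 | hreg3
          · -- m = 2ℓ+1, W := ups (norms 2ℓ+1-ℓ+1 = ℓ+2 > ℓ+1)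
            have hmeq : m = 2*ℓ + 1 := by omega
            have hW : (Sx x).image (fun j => flp j (cpl x)) ⊆ M {cpl x} \ J := by
              intro v hv
              obtain ⟨j, hj, rfl⟩ := mem_image.1 hv
              rw [mem_sdiff]
              constructor
              · rw [mem_M_singleton]; exact Or.inr ⟨j, rfl⟩
              · intro hvJ
                have := J_norm_le hvJ
                rw [hup_norm j hj] at this
                omega
            calc (M {x} \ J).card ≤ β := hA
              _ ≤ ((Sx x).image (fun j => flp j (cpl x))).card := by
                  rw [card_image_of_injOn (fun a _ b _ hab => flp_injOn hab), ← norm_eq_card_Sx]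
                  omega
              _ ≤ (M {cpl x} \ J).card := card_le_card hW
          · -- m = 2ℓ+2, W := insert (cpl x) ups (norms ℓ+2, ℓ+3)
            have hmeq : m = 2*ℓ + 2 := by omega
            have hW : insert (cpl x) ((Sx x).image (fun j => flp j (cpl x))) ⊆ M {cpl x} \ J := by
              intro v hv
              rcases mem_insert.1 hv with rfl | hv
              · rw [mem_sdiff]
                refine ⟨subset_M (mem_singleton_self _), ?_⟩
                intro hvJ
                have := J_norm_le hvJ
                rw [hnormc] at this
                omega
              · obtain ⟨j, hj, rfl⟩ := mem_image.1 hv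
                rw [mem_sdiff]
                constructor
                · rw [mem_M_singleton]; exact Or.inr ⟨j, rfl⟩
                · intro hvJ
                  have := J_norm_le hvJ
                  rw [hup_norm j hj] at this
                  omega
            calc (M {x} \ J).card ≤ β := hA
              _ ≤ (insert (cpl x) ((Sx x).image (fun j => flp j (cpl x)))).card := by
                  rw [card_insert_of_notMem, card_image_of_injOn (fun a _ b _ hab => flp_injOn hab),
                    ← norm_eq_card_Sx]
                  · omega
                  · rw [mem_image]
                    rintro ⟨j, -, hj⟩
                    have := congrFun hj j
                    rw [flp_apply_self] at this
                    exact z2d this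
              _ ≤ (M {cpl x} \ J).card := card_le_card hW
      · -- m ≥ 2ℓ+3 : whole neighbourhood of cpl x is outside J (norms ≥ ℓ+2)
        have hW : M {cpl x} ⊆ M {cpl x} \ J := by
          intro v hv
          rw [mem_sdiff]
          refine ⟨hv, ?_⟩
          intro hvJ
          have hnv := J_norm_le hvJ
          rcases mem_M_singleton.1 hv with rfl | ⟨k, rfl⟩
          · rw [hnormc] at hnv; omega
          · by_cases hk : k ∈ Sx x
            · rw [hup_norm k hk] at hnv; omega
            · have := hdown_norm k hk
              omega
        calc (M {x} \ J).card ≤ β := hA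
          _ ≤ (M {cpl x}).card := by rw [card_M_singleton]; omega
          _ ≤ (M {cpl x} \ J).card := card_le_card hW
  omega


lemma rk_le_card (x : ι → ZMod 2) : rk x ≤ Fintype.card (ι → ZMod 2) := by
  rw [rk, ← card_univ]
  exact card_filter_le _ _

lemma fixed_case (A : Finset (ι → ZMod 2)) (hfix : ∀ i : ι, Cp i A = A) :
    (M (init (ι := ι) A.card)).card ≤ (M A).card := by
  classical
  by_cases hlow : Low A
  · rw [← low_eq_init hlow]
  · rw [Low] at hlow
    push_neg at hlow
    obtain ⟨y₀, hy₀A, x', hx'y, hx'A⟩ := hlow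
    have hne : (univ.filter (fun z : ι → ZMod 2 => z ∉ A)).Nonempty :=
      ⟨x', by simp [hx'A]⟩
    obtain ⟨x₀, hx₀mem, hx₀min⟩ := exists_min_image _ rk hne
    have hx₀A : x₀ ∉ A := (mem_filter.1 hx₀mem).2
    have hIsub : ∀ z, hlt z x₀ → z ∈ A := by
      intro z hz
      by_contra hzA
      have := hx₀min z (by simp [hzA])
      exact absurd (rk_lt_rk hz) (by omega)
    have hy₀cpl : ∀ y ∈ A, hlt x₀ y → y = cpl x₀ := by
      intro y hyA hxy
      have hall := fixed_diff_all A hfix hx₀A hyA hxy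
      funext j
      exact z2c (hall j)
    have hx₀x' : rk x₀ ≤ rk x' := hx₀min x' (by simp [hx'A])
    have hx₀y₀ : hlt x₀ y₀ := hlt_of_rk_lt (by have := rk_lt_rk hx'y; omega)
    have hcplA : cpl x₀ ∈ A := (hy₀cpl y₀ hy₀A hx₀y₀) ▸ hy₀A
    have hAeq : A = insert (cpl x₀) (init (ι := ι) (rk x₀)) := by
      ext z
      rw [mem_insert, mem_I]
      constructor
      · intro hz
        rcases hlt_trichotomy z x₀ with h | h | h
        · exact Or.inr h
        · exact absurd (h ▸ hz) hx₀A
        · exact Or.inl (hy₀cpl z hz h)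
      · rintro (rfl | h)
        · exact hcplA
        · exact hIsub z h
    have hι : Nonempty ι := by
      by_contra hc
      have hxy' : x' = y₀ := funext fun i => absurd (Nonempty.intro i) hc
      rw [hxy'] at hx'y
      exact hlt_irrefl _ hx'y
    have hx₀cpl : hlt x₀ (cpl x₀) := by
      rcases hlt_trichotomy x₀ (cpl x₀) with h | h | h
      · exact h
      · exfalso
        obtain ⟨i⟩ := hι
        have := congrFun h i
        exact z2d this.symm
      · exfalso
        have hAinit : A = init (ι := ι) (rk x₀) := by
          rw [hAeq]
          apply insert_eq_self.2
          exact mem_I.2 h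
        have hx'mem : x' ∈ A := by
          rw [hAinit] at hy₀A ⊢
          exact low_init _ hy₀A hx'y
        exact hx'A hx'mem
    have hcard : A.card = rk x₀ + 1 := by
      rw [hAeq, card_insert_of_notMem, card_init_of_le (rk_le_card x₀)]
      intro hmem
      exact hlt_asymm hx₀cpl (mem_I.1 hmem)
    have hinit : init (ι := ι) A.card = insert x₀ (init (ι := ι) (rk x₀)) := by
      ext z
      rw [mem_init, hcard, mem_insert, mem_init]
      constructor
      · intro h
        rcases Nat.lt_or_ge (rk z) (rk x₀) with h2 | h2
        · exact Or.inr h2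
        · exact Or.inl (rk_inj (by omega))
      · rintro (rfl | h) <;> omega
    rw [hinit, hAeq]
    rcases Nat.eq_zero_or_pos (hammingNorm x₀) with h0 | h1
    · have hrk0 : rk x₀ = 0 := by
        rw [rk, card_eq_zero]
        ext z
        simp only [mem_filter, mem_univ, true_and, notMem_empty, iff_false]
        intro hz
        rcases hz with h | ⟨hn, i, hne, h1, hb⟩
        · omega
        · have hzn : hammingNorm z = 0 := by omega
          rw [hammingNorm_eq_zero] at hzn
          rw [hzn, Pi.zero_apply] at h1
          exact absurd h1 (by decide)
      have hinit0 : init (ι := ι) (rk x₀) = ∅ := by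
        rw [hrk0]
        ext z
        simp [mem_init]
      rw [hinit0, insert_empty_eq, insert_empty_eq, card_M_singleton, card_M_singleton]
    · exact exceptional x₀ h1 hx₀cpl

theorem harperM (n : ℕ) : ∀ {κ : Type} [Fintype κ] [LinearOrder κ], Fintype.card κ ≤ n →
    ∀ A : Finset (κ → ZMod 2), (M (init (ι := κ) A.card)).card ≤ (M A).card := by
  induction n using Nat.strong_induction_on with
  | _ n IHn =>
  intro κ _ _ hcard A
  classical
  suffices h : ∀ (k : ℕ) (B : Finset (κ → ZMod 2)), mu B ≤ k →
      (M (init (ι := κ) B.card)).card ≤ (M B).card by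
    exact h (mu A) A le_rfl
  intro k
  induction k with
  | zero =>
    intro B hμ
    by_cases hfix : ∀ i : κ, Cp i B = B
    · exact fixed_case B hfix
    · push_neg at hfix
      obtain ⟨i₀, hi₀⟩ := hfix
      have := mu_Cp_lt i₀ B hi₀
      omega
  | succ k IHk =>
    intro B hμ
    by_cases hfix : ∀ i : κ, Cp i B = B
    · exact fixed_case B hfix
    · push_neg at hfix
      obtain ⟨i₀, hi₀⟩ := hfix
      have h1 := mu_Cp_lt i₀ B hi₀
      have h2 := IHk (Cp i₀ B) (by omega)
      have hcardι : 1 ≤ Fintype.card κ := Fintype.card_pos_iff.mpr ⟨i₀⟩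
      have hsub : Fintype.card {j : κ // j ≠ i₀} ≤ n - 1 := by
        have : Fintype.card {j : κ // j ≠ i₀} = Fintype.card κ - 1 := by
          simp [Fintype.card_subtype_compl]
        omega
      have h3 := card_M_Cp_le i₀ (fun C => IHn (n-1) (by omega) hsub C) B
      calc (M (init (ι := κ) B.card)).card
          = (M (init (ι := κ) (Cp i₀ B).card)).card := by rw [card_Cp]
        _ ≤ (M (Cp i₀ B)).card := h2
        _ ≤ (M B).card := h3

end Harper

theorem stmt_13 (m : ℕ) (A : Set (Fin m → ZMod 2)) :
    Nat.card (outerBoundary (halesInit m (Nat.card A))) ≤ Nat.card (outerBoundary A) := by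
  classical
  have hlt_eq : ∀ x y : Fin m → ZMod 2, halesLT x y ↔ Harper.hlt x y := fun x y => Iff.rfl
  have hfin : A.Finite := Set.toFinite A
  set Af : Finset (Fin m → ZMod 2) := hfin.toFinset with hAfdef
  have hAcoe : (↑Af : Set (Fin m → ZMod 2)) = A := hfin.coe_toFinset
  have hcardA : Nat.card A = Af.card := by
    rw [← hAcoe, Nat.card_coe_set_eq, Set.ncard_coe_finset]
  have hOB : ∀ (S : Finset (Fin m → ZMod 2)),
      outerBoundary (↑S : Set (Fin m → ZMod 2)) = ↑(Harper.M S \ S) := by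
    intro S
    ext v
    simp only [outerBoundary, Set.mem_setOf_eq, Finset.coe_sdiff, Set.mem_diff,
      Finset.mem_coe, Harper.mem_M]
    constructor
    · rintro ⟨hv, u, hu, hd⟩
      exact ⟨⟨u, hu, le_of_eq hd⟩, hv⟩
    · rintro ⟨⟨u, hu, hd⟩, hv⟩
      refine ⟨hv, u, hu, ?_⟩
      rcases Nat.le_one_iff_eq_zero_or_eq_one.1 hd with h0 | h1
      · rw [hammingDist_eq_zero] at h0
        exact absurd (h0 ▸ hu) hv
      · exact h1
  have hInitEq : halesInit m (Nat.card A) = ↑(Harper.init (ι := Fin m) Af.card) := by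
    rw [hcardA]
    ext x
    have hrk : Nat.card {y : Fin m → ZMod 2 | halesLT y x} = Harper.rk x := by
      rw [Nat.card_coe_set_eq, Harper.rk, ← Set.ncard_coe_finset]
      congr 1
      ext y
      simp [hlt_eq]
    simp only [halesInit, Set.mem_setOf_eq, Finset.mem_coe, Harper.mem_init, hrk]
  rw [hInitEq, ← hAcoe, hOB, hOB]
  rw [Nat.card_coe_set_eq, Set.ncard_coe_finset, Nat.card_coe_set_eq, Set.ncard_coe_finset]
  have hIcard : (Harper.init (ι := Fin m) Af.card).card = Af.card := by
    apply Harper.card_init_of_le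
    have h := card_le_univ Af
    convert h using 2
  have hmain := Harper.harperM (Fintype.card (Fin m)) (le_refl _) Af
  rw [Finset.card_sdiff_of_subset Harper.subset_M, Finset.card_sdiff_of_subset Harper.subset_M, hIcard]
  omega
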